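/- For the connection of M(c), the covariant derivative of the Ricci tensor ∇ρ vanishes if and only if c = 0; i.e., M(c) is affine symmetric if and only if c = 0. -/

import Mathlib

noncomputable def e : Fin 2 → ℝ × ℝ
  | 0 => (1, 0)
  | 1 => (0, 1)

noncomputable def pd (i : Fin 2) (f : ℝ × ℝ → ℝ) (p : ℝ × ℝ) : ℝ :=
  fderiv ℝ f p (e i)

/-- Christoffel symbols of `M(c)`. -/
noncomputable def Γ (c : ℝ) (i j k : Fin 2) (p : ℝ × ℝ) : ℝ :=
  if i = 1 ∧ j = 1 then (if k = 0 then (1 + c ^ 2) * p.1 else 2 * c) else 0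

/-- The Ricci tensor of `M(c)`: `ρ = (1+c²) dx²⊗dx²`. -/
noncomputable def ricci (c : ℝ) (i j : Fin 2) (_p : ℝ × ℝ) : ℝ :=
  if i = 1 ∧ j = 1 then 1 + c ^ 2 else 0

/-- Covariant derivative of the Ricci tensor:
`(∇ρ)(∂ᵢ,∂ⱼ;∂ₖ) = ∂ₖρ_{ij} − Σ_m Γ_{ki}^m ρ_{mj} − Σ_m Γ_{kj}^m ρ_{im}`. -/
noncomputable def nablaRicci (c : ℝ) (i j k : Fin 2) (p : ℝ × ℝ) : ℝ :=
  pd k (ricci c i j) p - ∑ m : Fin 2, Γ c k i m p * ricci c m j p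
    - ∑ m : Fin 2, Γ c k j m p * ricci c i m p

lemma fderiv_ricci (c : ℝ) (i j : Fin 2) (p : ℝ × ℝ) :
    fderiv ℝ (ricci c i j) p = 0 := by
  have : ricci c i j = fun _ => (if i = 1 ∧ j = 1 then 1 + c ^ 2 else 0) := rfl
  rw [this, fderiv_fun_const]
  rfl

/-- `∇ρ = 0` for `M(c)` if and only if `c = 0`;
i.e., `M(c)` is affine symmetric if and only if `c = 0`. -/
theorem Mc_affine_symmetric_iff (c : ℝ) :
    (∀ i j k : Fin 2, ∀ p : ℝ × ℝ, nablaRicci c i j k p = 0) ↔ c = 0 := by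
  constructor
  · intro h
    have h1 := h 1 1 1 (0, 0)
    simp [nablaRicci, pd, ricci, Γ, Fin.sum_univ_two, fderiv_ricci] at h1
    nlinarith [sq_nonneg c]
  · intro hc i j k p
    subst hc
    fin_cases i <;> fin_cases j <;> fin_cases k <;>
      simp [nablaRicci, pd, Γ, Fin.sum_univ_two, fderiv_ricci, ricci]
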